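/- Let ε ≥ 0, let m be a positive integer with |J| ≤ m, and set ε̄ := (1+ε)^{1/m} − 1. Let R = (R_i)_{i∈Ā} be an ε̄-local optimum with respect to the endowed valuations v̄_i. Let (S_i)_{i∈A} be any partition of J among all agents of A, and let h_i ≥ 0 (i ∈ A) be reals with Σ_{i∈A} h_i ≤ n. Then ∏_{i ∈ A∖Ā} h_i^{w_i} · ∏_{i∈Ā} ( v_i(S_i) / max{ v_i(ℓ(i)), v_i(R_i) } + h_i )^{w_i} ≤ (1+ε)·φ(n·w_max)·e, where φ(ν) := sup_{x ∈ (0,1]} 2^{1−x}·(1 + ν/x)^x. -/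

import Mathlib

open Finset

section helpers
variable {J : Type*} [DecidableEq J]

lemma one_add_sum_le_prod (T : Finset J) (c : J → ℝ) (hc : ∀ j ∈ T, 0 ≤ c j) :
    1 + ∑ j ∈ T, c j ≤ ∏ j ∈ T, (1 + c j) := by
  classical
  induction T using Finset.induction_on with
  | empty => simp
  | @insert j T hj ih =>
    rw [Finset.prod_insert hj, Finset.sum_insert hj]
    have h1 : 0 ≤ c j := hc j (Finset.mem_insert_self _ _)
    have h2 : 1 + ∑ x ∈ T, c x ≤ ∏ x ∈ T, (1 + c x) :=
      ih (fun x hx => hc x (Finset.mem_insert_of_mem hx))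
    have h3 : 0 ≤ ∑ x ∈ T, c x :=
      Finset.sum_nonneg (fun x hx => hc x (Finset.mem_insert_of_mem hx))
    nlinarith

lemma marginal_sum_le (v : Finset J → ℝ)
    (hmono : ∀ S T : Finset J, S ⊆ T → v S ≤ v T)
    (hsub : ∀ S T : Finset J, v (S ∩ T) + v (S ∪ T) ≤ v S + v T)
    (R T : Finset J) :
    v (R ∪ T) ≤ v R + ∑ j ∈ T, (v (insert j R) - v R) := by
  classical
  induction T using Finset.induction_on with
  | empty => simp
  | @insert j T hj ih =>
    rw [Finset.sum_insert hj]
    have key : v (R ∪ insert j T) ≤ v (R ∪ T) + (v (insert j R) - v R) := by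
      by_cases hjR : j ∈ R ∪ T
      · have he : R ∪ insert j T = R ∪ T := by
          rw [Finset.union_insert, Finset.insert_eq_self.2 hjR]
        rw [he]
        have := hmono R (insert j R) (Finset.subset_insert _ _)
        linarith
      · have hint : (insert j R) ∩ (R ∪ T) = R := by
          ext x
          simp only [Finset.mem_inter, Finset.mem_insert, Finset.mem_union] at *
          constructor
          · rintro ⟨h1 | h1, h2⟩
            · subst h1; exact absurd (by simpa using h2) (by simpa using hjR)
            · exact h1
          · intro hx; exact ⟨Or.inr hx, Or.inl hx⟩
        have hunion : (insert j R) ∪ (R ∪ T) = R ∪ insert j T := by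
          ext x
          simp only [Finset.mem_union, Finset.mem_insert]
          tauto
        have := hsub (insert j R) (R ∪ T)
        rw [hint, hunion] at this
        linarith
    linarith

lemma erase_sum_le (v : Finset J → ℝ)
    (hsub : ∀ S T : Finset J, v (S ∩ T) + v (S ∪ T) ≤ v S + v T)
    (R : Finset J) :
    ∀ T : Finset J, T ⊆ R → ∑ j ∈ T, (v R - v (R.erase j)) ≤ v R - v (R \ T) := by
  classical
  intro T
  induction T using Finset.induction_on with
  | empty => simp
  | @insert j T hj ih =>
    intro hins
    have hjR : j ∈ R := hins (Finset.mem_insert_self _ _)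
    have hTR : T ⊆ R := fun x hx => hins (Finset.mem_insert_of_mem hx)
    rw [Finset.sum_insert hj]
    have key : v R + v (R \ insert j T) ≤ v (R.erase j) + v (R \ T) := by
      have hint : (R.erase j) ∩ (R \ T) = R \ insert j T := by
        ext x
        simp only [Finset.mem_inter, Finset.mem_erase, Finset.mem_sdiff, Finset.mem_insert]
        tauto
      have hunion : (R.erase j) ∪ (R \ T) = R := by
        ext x
        simp only [Finset.mem_union, Finset.mem_erase, Finset.mem_sdiff]
        constructor
        · rintro (⟨_, hx⟩ | ⟨hx, _⟩) <;> exact hx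
        · intro hx
          by_cases hxj : x = j
          · subst hxj; exact Or.inr ⟨hx, hj⟩
          · exact Or.inl ⟨hxj, hx⟩
      have := hsub (R.erase j) (R \ T)
      rw [hint, hunion] at this
      linarith
    have := ih hTR
    linarith

end helpers

set_option maxHeartbeats 2000000 in
/-- (Improved ratio bound, asymmetric case.)
Let `ε ≥ 0`, `|J| ≤ m`, `ε̄ := (1+ε)^{1/m} − 1`, and let `R` be an `ε̄`-local optimum
with respect to the endowed valuations `v̄_i`. For any partition `(S_i)_{i∈A}` of `J` and
reals `h_i ≥ 0` with `Σ h_i ≤ n`,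
`∏_{i∈A∖Ā} h_i^{w_i} · ∏_{i∈Ā} (v_i(S_i)/max{v_i(ℓ(i)),v_i(R_i)} + h_i)^{w_i}
  ≤ (1+ε)·φ(n·w_max)·e`, where `φ(ν) := sup_{x∈(0,1]} 2^{1−x}·(1+ν/x)^x`. -/
theorem ratio_bound_asymmetric_phi {J A : Type*} [Fintype J] [DecidableEq J]
    [Fintype A] [DecidableEq A] [Nonempty A]
    (n : ℕ) (hn : n = Fintype.card A)
    (w : A → ℝ) (hw : ∀ i, 0 < w i) (hwsum : ∑ i, w i = 1)
    (wmax : ℝ) (hwmax : ∀ i, w i ≤ wmax) (hwmax' : ∃ i, w i = wmax)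
    (v : A → Finset J → ℝ)
    (hmono : ∀ i, ∀ S T : Finset J, S ⊆ T → v i S ≤ v i T)
    (hsubmod : ∀ i, ∀ S T : Finset J, v i (S ∩ T) + v i (S ∪ T) ≤ v i S + v i T)
    (hv0 : ∀ i, v i ∅ = 0)
    (Abar : Finset A) (hAbar : Abar = univ.filter (fun i => 0 < v i (univ : Finset J)))
    (hAbarne : Abar.Nonempty)
    (ℓ : A → J) (hℓ : ∀ i ∈ Abar, ∀ j : J, v i {j} ≤ v i {ℓ i})
    (vb : A → Finset J → ℝ) (hvb : ∀ i S, vb i S = v i {ℓ i} + v i S)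
    (ε : ℝ) (hε : 0 ≤ ε) (m : ℕ) (hm : 0 < m) (hJm : Fintype.card J ≤ m)
    (ε' : ℝ) (hε' : ε' = (1 + ε) ^ ((m : ℝ)⁻¹) - 1)
    (R : A → Finset J)
    (hRout : ∀ i ∉ Abar, R i = ∅)
    (hRdisj : ∀ i k, i ≠ k → Disjoint (R i) (R k))
    (hRcover : Abar.biUnion R = (univ : Finset J))
    (hloc : ∀ i ∈ Abar, ∀ k ∈ Abar, i ≠ k → ∀ j ∈ R i,
      (vb i ((R i).erase j) / vb i (R i)) ^ (w i) *
        (vb k (R k ∪ {j}) / vb k (R k)) ^ (w k) ≤ 1 + ε')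
    (S : A → Finset J)
    (hSdisj : ∀ i k, i ≠ k → Disjoint (S i) (S k))
    (hScover : Finset.univ.biUnion S = (univ : Finset J))
    (h : A → ℝ) (hh : ∀ i, 0 ≤ h i) (hhsum : ∑ i, h i ≤ (n : ℝ))
    (φ : ℝ → ℝ)
    (hφ : ∀ ν : ℝ, φ ν =
      sSup ((fun x : ℝ => (2 : ℝ) ^ (1 - x) * (1 + ν / x) ^ x) '' Set.Ioc 0 1)) :
    (∏ i ∈ univ \ Abar, h i ^ (w i)) *
      ∏ i ∈ Abar, (v i (S i) / max (v i {ℓ i}) (v i (R i)) + h i) ^ (w i)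
        ≤ (1 + ε) * φ (n * wmax) * Real.exp 1 := by
  classical
  set ν : ℝ := (n : ℝ) * wmax with hνdef
  set L : ℝ := Real.log (1 + ε) with hLdef
  have hε1 : (0:ℝ) < 1 + ε := by linarith
  have hL0 : 0 ≤ L := Real.log_nonneg (by linarith)
  -- basic positivity
  have hv_nonneg : ∀ i (S' : Finset J), 0 ≤ v i S' := fun i S' => by
    have := hmono i ∅ S' (Finset.empty_subset _); rwa [hv0] at this
  have ha_pos : ∀ i ∈ Abar, 0 < v i {ℓ i} := by
    intro i hi
    have hiA : 0 < v i (univ : Finset J) := by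
      rw [hAbar, Finset.mem_filter] at hi; exact hi.2
    by_contra hle
    push_neg at hle
    have hsub' : v i (univ : Finset J) ≤ ∑ j : J, v i {j} := by
      have := marginal_sum_le (v i) (hmono i) (hsubmod i) ∅ univ
      simpa [hv0 i] using this
    have : ∑ j : J, v i {j} ≤ 0 :=
      Finset.sum_nonpos (fun j _ => (hℓ i hi j).trans hle)
    linarith
  have hvb_pos : ∀ i ∈ Abar, ∀ S' : Finset J, 0 < vb i S' := by
    intro i hi S'
    rw [hvb]
    have := hv_nonneg i S'
    linarith [ha_pos i hi]
  have hvb_mono : ∀ i, ∀ S' T' : Finset J, S' ⊆ T' → vb i S' ≤ vb i T' := by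
    intro i S' T' hST
    rw [hvb, hvb]
    linarith [hmono i S' T' hST]
  -- the owner function
  have hown : ∀ j : J, ∃ i, i ∈ Abar ∧ j ∈ R i := by
    intro j
    have : j ∈ Abar.biUnion R := by rw [hRcover]; exact mem_univ j
    simpa [Finset.mem_biUnion] using this
  choose o ho1 ho2 using hown
  have ho_eq : ∀ i ∈ Abar, ∀ j ∈ R i, o j = i := by
    intro i _ j hj
    by_contra hne
    exact (Finset.disjoint_left.1 (hRdisj (o j) i hne) (ho2 j)) hj
  set g : J → ℝ := fun j =>
    w (o j) * (Real.log (vb (o j) (R (o j))) - Real.log (vb (o j) ((R (o j)).erase j)))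
    with hgdef
  have hg_nonneg : ∀ j, 0 ≤ g j := by
    intro j
    apply mul_nonneg (hw _).le
    have h1 : vb (o j) ((R (o j)).erase j) ≤ vb (o j) (R (o j)) :=
      hvb_mono _ _ _ (Finset.erase_subset _ _)
    have h2 : 0 < vb (o j) ((R (o j)).erase j) := hvb_pos _ (ho1 j) _
    linarith [Real.log_le_log h2 h1]
  -- pairing with local optimality
  have hpair : ∀ k ∈ Abar, ∀ j ∈ S k \ R k,
      w k * Real.log (vb k (R k ∪ {j}) / vb k (R k)) ≤ (m:ℝ)⁻¹ * L + g j := by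
    intro k hk j hj
    rw [Finset.mem_sdiff] at hj
    have hjR : j ∈ R (o j) := ho2 j
    have hne : o j ≠ k := fun he => hj.2 (he ▸ hjR)
    have hl := hloc (o j) (ho1 j) k hk hne j hjR
    have p1 : (0:ℝ) < vb (o j) ((R (o j)).erase j) / vb (o j) (R (o j)) :=
      div_pos (hvb_pos _ (ho1 j) _) (hvb_pos _ (ho1 j) _)
    have p2 : (0:ℝ) < vb k (R k ∪ {j}) / vb k (R k) :=
      div_pos (hvb_pos _ hk _) (hvb_pos _ hk _)
    have hq1 : (0:ℝ) < (vb (o j) ((R (o j)).erase j) / vb (o j) (R (o j))) ^ (w (o j)) :=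
      Real.rpow_pos_of_pos p1 _
    have hq2 : (0:ℝ) < (vb k (R k ∪ {j}) / vb k (R k)) ^ (w k) :=
      Real.rpow_pos_of_pos p2 _
    have hlog := Real.log_le_log (by positivity) hl
    rw [Real.log_mul (ne_of_gt hq1) (ne_of_gt hq2), Real.log_rpow p1, Real.log_rpow p2] at hlog
    have hrhs : Real.log (1 + ε') = (m:ℝ)⁻¹ * L := by
      have : (1:ℝ) + ε' = (1 + ε) ^ ((m : ℝ)⁻¹) := by rw [hε']; ring
      rw [this, Real.log_rpow hε1, hLdef]
    rw [hrhs] at hlog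
    have hlogdiv : Real.log (vb (o j) ((R (o j)).erase j) / vb (o j) (R (o j)))
        = Real.log (vb (o j) ((R (o j)).erase j)) - Real.log (vb (o j) (R (o j))) :=
      Real.log_div (ne_of_gt (hvb_pos _ (ho1 j) _)) (ne_of_gt (hvb_pos _ (ho1 j) _))
    rw [hlogdiv] at hlog
    rw [hgdef]
    simp only
    nlinarith [hlog]
  
  -- Step B-1: per-agent exchange bound
  have hstep1 : ∀ k ∈ Abar,
      Real.log (vb k (S k) / vb k (R k)) ≤
        ∑ j ∈ S k \ R k, Real.log (vb k (R k ∪ {j}) / vb k (R k)) := by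
    intro k hk
    set T := S k \ R k with hT
    have hV : 0 < vb k (R k) := hvb_pos k hk _
    set c : J → ℝ := fun j => (vb k (insert j (R k)) - vb k (R k)) / vb k (R k) with hcdef
    have hc0 : ∀ j ∈ T, 0 ≤ c j := by
      intro j _
      apply div_nonneg _ hV.le
      have := hvb_mono k (R k) (insert j (R k)) (Finset.subset_insert _ _)
      linarith
    have hmarg : vb k (R k ∪ T) ≤ vb k (R k) + ∑ j ∈ T, (vb k (insert j (R k)) - vb k (R k)) := by
      have hmain := marginal_sum_le (v k) (hmono k) (hsubmod k) (R k) T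
      have he : ∀ j ∈ T, vb k (insert j (R k)) - vb k (R k) = v k (insert j (R k)) - v k (R k) := by
        intro j _; rw [hvb, hvb]; ring
      rw [Finset.sum_congr rfl he, hvb, hvb]
      linarith
    have hSsub : S k ⊆ R k ∪ T := by
      intro x hx
      by_cases hxR : x ∈ R k
      · exact Finset.mem_union.2 (Or.inl hxR)
      · exact Finset.mem_union.2 (Or.inr (Finset.mem_sdiff.2 ⟨hx, hxR⟩))
    have h3 : vb k (R k) + ∑ j ∈ T, (vb k (insert j (R k)) - vb k (R k))
        = vb k (R k) * (1 + ∑ j ∈ T, c j) := by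
      rw [mul_add, mul_one, Finset.mul_sum]
      congr 1
      refine Finset.sum_congr rfl fun j _ => ?_
      rw [hcdef]
      field_simp
    have hSle : vb k (S k) ≤ vb k (R k) * ∏ j ∈ T, (1 + c j) := by
      have h1 := hvb_mono k _ _ hSsub
      have h2 := one_add_sum_le_prod T c hc0
      have h4 := mul_le_mul_of_nonneg_left h2 hV.le
      rw [h3] at hmarg
      linarith
    have hprodpos : ∀ j ∈ T, (0:ℝ) < 1 + c j := fun j hj => by linarith [hc0 j hj]
    have h1pc : ∀ j ∈ T, 1 + c j = vb k (R k ∪ {j}) / vb k (R k) := by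
      intro j _
      have hu : R k ∪ {j} = insert j (R k) := by
        rw [Finset.union_comm, ← Finset.insert_eq]
      rw [hcdef, hu]
      field_simp
      ring
    calc Real.log (vb k (S k) / vb k (R k))
        ≤ Real.log (∏ j ∈ T, (1 + c j)) := by
          apply Real.log_le_log (div_pos (hvb_pos k hk _) hV)
          rw [div_le_iff₀ hV]
          calc vb k (S k) ≤ vb k (R k) * ∏ j ∈ T, (1 + c j) := hSle
            _ = (∏ j ∈ T, (1 + c j)) * vb k (R k) := by ring
      _ = ∑ j ∈ T, Real.log (1 + c j) := Real.log_prod (fun j hj => (hprodpos j hj).ne')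
      _ = ∑ j ∈ T, Real.log (vb k (R k ∪ {j}) / vb k (R k)) :=
          Finset.sum_congr rfl fun j hj => by rw [h1pc j hj]
  -- Step B-6: per-agent removal bound
  have hB6 : ∀ i ∈ Abar,
      ∑ j ∈ R i, (Real.log (vb i (R i)) - Real.log (vb i ((R i).erase j))) ≤ 1 := by
    intro i hi
    have ha : 0 < v i {ℓ i} := ha_pos i hi
    set a := v i {ℓ i} with hadef
    set b := v i (R i) with hbdef
    have hb0 : 0 ≤ b := hv_nonneg i _
    have hVab : vb i (R i) = a + b := hvb i (R i)
    rcases eq_or_lt_of_le hb0 with hb | hb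
    · have hz : ∀ j ∈ R i, Real.log (vb i (R i)) - Real.log (vb i ((R i).erase j)) = 0 := by
        intro j hj
        have h1 : v i ((R i).erase j) ≤ b := hmono i _ _ (Finset.erase_subset _ _)
        have h2 : 0 ≤ v i ((R i).erase j) := hv_nonneg i _
        have h5 : v i ((R i).erase j) = 0 := le_antisymm (h1.trans hb.ge) h2
        have h6 : v i (R i) = 0 := hbdef.symm.trans hb.symm
        rw [hvb, hvb, h5, h6]
        simp
      rw [Finset.sum_eq_zero hz]
      norm_num
    · set d : J → ℝ := fun j => b - v i ((R i).erase j) with hddef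
      have hd0 : ∀ j ∈ R i, 0 ≤ d j := by
        intro j _
        have := hmono i _ _ (Finset.erase_subset j (R i))
        simp only [hddef]
        rw [hbdef]
        linarith
      have hda : ∀ j ∈ R i, d j ≤ a := by
        intro j hj
        have hsub' := hsubmod i {j} ((R i).erase j)
        have hint : ({j} : Finset J) ∩ (R i).erase j = ∅ :=
          Finset.singleton_inter_of_notMem (Finset.notMem_erase _ _)
        have huni : ({j} : Finset J) ∪ (R i).erase j = R i := by
          rw [← Finset.insert_eq, Finset.insert_erase hj]
        rw [hint, huni, hv0] at hsub'
        have hle := hℓ i hi j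
        simp only [hddef]
        rw [hbdef, hadef]
        linarith
      have hterm : ∀ j ∈ R i, Real.log (vb i (R i)) - Real.log (vb i ((R i).erase j))
          ≤ (d j / a) * (Real.log (a + b) - Real.log b) := by
        intro j hj
        set θ := d j / a with hθdef
        have hθ0 : 0 ≤ θ := div_nonneg (hd0 j hj) ha.le
        have hθ1 : θ ≤ 1 := (div_le_one ha).2 (hda j hj)
        have hVe : vb i ((R i).erase j) = (a + b) - d j := by
          rw [hvb]
          simp only [hddef]
          rw [hadef, hbdef]
          ring
        have hgm := Real.geom_mean_le_arith_mean2_weighted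
          (by linarith : (0:ℝ) ≤ 1 - θ) hθ0 (by linarith : (0:ℝ) ≤ a + b) hb0 (by ring)
        have harith : (1 - θ) * (a + b) + θ * b = (a + b) - d j := by
          rw [hθdef]
          field_simp
          ring
        have hpos1 : (0:ℝ) < (a + b) ^ (1 - θ) := Real.rpow_pos_of_pos (by linarith) _
        have hpos2 : (0:ℝ) < b ^ θ := Real.rpow_pos_of_pos hb _
        have hdb : 0 < (a + b) - d j := by
          have := hda j hj
          linarith
        have hlog1 : Real.log ((a + b) ^ (1 - θ) * b ^ θ) ≤ Real.log ((a + b) - d j) := by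
          apply Real.log_le_log (by positivity)
          rw [← harith]
          exact hgm
        rw [Real.log_mul hpos1.ne' hpos2.ne', Real.log_rpow (by linarith), Real.log_rpow hb]
          at hlog1
        rw [hVab, hVe]
        linarith
    -- sum up
      have hsumd : ∑ j ∈ R i, d j ≤ b := by
        have hes := erase_sum_le (v i) (hsubmod i) (R i) (R i) (subset_refl _)
        rw [Finset.sdiff_self, hv0] at hes
        simp only [hddef]
        rw [hbdef]
        convert hes using 1
        norm_num
      have hlogs : 0 ≤ Real.log (a + b) - Real.log b := by
        have := Real.log_le_log hb (by linarith : b ≤ a + b)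
        linarith
      calc ∑ j ∈ R i, (Real.log (vb i (R i)) - Real.log (vb i ((R i).erase j)))
          ≤ ∑ j ∈ R i, (d j / a) * (Real.log (a + b) - Real.log b) :=
            Finset.sum_le_sum hterm
        _ = ((∑ j ∈ R i, d j) / a) * (Real.log (a + b) - Real.log b) := by
            rw [← Finset.sum_mul, ← Finset.sum_div]
        _ ≤ (b / a) * (Real.log (a + b) - Real.log b) := by
            apply mul_le_mul_of_nonneg_right _ hlogs
            exact div_le_div_of_nonneg_right hsumd ha.le
        _ ≤ 1 := by
            have hlogx := Real.log_le_sub_one_of_pos (div_pos (by linarith : (0:ℝ) < a + b) hb)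
            rw [Real.log_div (by linarith : (a:ℝ) + b ≠ 0) hb.ne'] at hlogx
            have he1 : (a + b) / b - 1 = a / b := by field_simp; ring
            rw [he1] at hlogx
            have h1 : (b / a) * (Real.log (a + b) - Real.log b) ≤ (b / a) * (a / b) :=
              mul_le_mul_of_nonneg_left hlogx (by positivity)
            have h2 : (b / a) * (a / b) = 1 := by field_simp
            linarith
  
  -- main local-search bound
  set B₁ := Abar.filter (fun k => 1 < vb k (S k) / vb k (R k)) with hB₁def
  have hB₁Abar : B₁ ⊆ Abar := Finset.filter_subset _ _
  have hBsum : ∑ k ∈ B₁, w k * Real.log (vb k (S k) / vb k (R k)) ≤ L + 1 := by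
    have hstep : ∀ k ∈ B₁, w k * Real.log (vb k (S k) / vb k (R k))
        ≤ ∑ j ∈ S k \ R k, ((m:ℝ)⁻¹ * L + g j) := by
      intro k hk
      have hk' : k ∈ Abar := hB₁Abar hk
      calc w k * Real.log (vb k (S k) / vb k (R k))
          ≤ w k * ∑ j ∈ S k \ R k, Real.log (vb k (R k ∪ {j}) / vb k (R k)) :=
            mul_le_mul_of_nonneg_left (hstep1 k hk') (hw k).le
        _ = ∑ j ∈ S k \ R k, w k * Real.log (vb k (R k ∪ {j}) / vb k (R k)) :=
            Finset.mul_sum _ _ _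
        _ ≤ ∑ j ∈ S k \ R k, ((m:ℝ)⁻¹ * L + g j) :=
            Finset.sum_le_sum (fun j hj => hpair k hk' j hj)
    have h1 := Finset.sum_le_sum hstep
    have hdisj : ∀ k ∈ B₁, ∀ l ∈ B₁, k ≠ l → Disjoint (S k \ R k) (S l \ R l) := by
      intro k _ l _ hkl
      exact Finset.disjoint_of_subset_left Finset.sdiff_subset
        (Finset.disjoint_of_subset_right Finset.sdiff_subset (hSdisj k l hkl))
    set U := B₁.biUnion (fun k => S k \ R k) with hU
    have h2 : ∑ j ∈ U, ((m:ℝ)⁻¹ * L + g j)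
        = ∑ k ∈ B₁, ∑ j ∈ S k \ R k, ((m:ℝ)⁻¹ * L + g j) := by
      apply Finset.sum_biUnion
      intro k hk l hl hkl
      exact hdisj k (Finset.mem_coe.1 hk) l (Finset.mem_coe.1 hl) hkl
    have hcard : (U.card : ℝ) ≤ (m : ℝ) := by
      have h9 : U.card ≤ m := le_trans (Finset.card_le_univ U) hJm
      exact_mod_cast h9
    have h3 : ∑ j ∈ U, ((m:ℝ)⁻¹ * L + g j) = U.card * ((m:ℝ)⁻¹ * L) + ∑ j ∈ U, g j := by
      rw [Finset.sum_add_distrib, Finset.sum_const, nsmul_eq_mul]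
    have hm' : (0:ℝ) < m := by exact_mod_cast hm
    have h4 : (U.card : ℝ) * ((m:ℝ)⁻¹ * L) ≤ L := by
      calc (U.card : ℝ) * ((m:ℝ)⁻¹ * L) ≤ (m:ℝ) * ((m:ℝ)⁻¹ * L) :=
            mul_le_mul_of_nonneg_right hcard (by positivity)
        _ = L := by field_simp
    have h5 : ∑ j ∈ U, g j ≤ ∑ j ∈ (univ : Finset J), g j :=
      Finset.sum_le_sum_of_subset_of_nonneg (Finset.subset_univ _) (fun j _ _ => hg_nonneg j)
    have h6 : ∑ j ∈ (univ : Finset J), g j ≤ 1 := by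
      rw [← hRcover, Finset.sum_biUnion (fun i hi l hl hil => hRdisj i l hil)]
      have h7 : ∀ i ∈ Abar, ∑ j ∈ R i, g j ≤ w i := by
        intro i hi
        have h8 : ∀ j ∈ R i, g j
            = w i * (Real.log (vb i (R i)) - Real.log (vb i ((R i).erase j))) := by
          intro j hj
          rw [hgdef]
          simp only
          rw [ho_eq i hi j hj]
        rw [Finset.sum_congr rfl h8, ← Finset.mul_sum]
        calc w i * ∑ j ∈ R i, (Real.log (vb i (R i)) - Real.log (vb i ((R i).erase j)))
            ≤ w i * 1 := mul_le_mul_of_nonneg_left (hB6 i hi) (hw i).le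
          _ = w i := mul_one _
      calc ∑ i ∈ Abar, ∑ j ∈ R i, g j ≤ ∑ i ∈ Abar, w i := Finset.sum_le_sum h7
        _ ≤ ∑ i ∈ univ, w i :=
            Finset.sum_le_sum_of_subset_of_nonneg (Finset.subset_univ _)
              (fun i _ _ => (hw i).le)
        _ = 1 := hwsum
    calc ∑ k ∈ B₁, w k * Real.log (vb k (S k) / vb k (R k))
        ≤ ∑ j ∈ U, ((m:ℝ)⁻¹ * L + g j) := by rw [h2]; exact h1
      _ = U.card * ((m:ℝ)⁻¹ * L) + ∑ j ∈ U, g j := h3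
      _ ≤ L + 1 := by linarith
  have hprodB : ∏ k ∈ B₁, (vb k (S k) / vb k (R k)) ^ (w k) ≤ (1 + ε) * Real.exp 1 := by
    have hpos : ∀ k ∈ B₁, (0:ℝ) < vb k (S k) / vb k (R k) := by
      intro k hk
      rw [hB₁def, Finset.mem_filter] at hk
      linarith [hk.2]
    calc ∏ k ∈ B₁, (vb k (S k) / vb k (R k)) ^ (w k)
        = Real.exp (∑ k ∈ B₁, w k * Real.log (vb k (S k) / vb k (R k))) := by
          rw [Real.exp_sum]
          refine Finset.prod_congr rfl fun k hk => ?_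
          rw [Real.rpow_def_of_pos (hpos k hk), mul_comm]
      _ ≤ Real.exp (L + 1) := Real.exp_le_exp.2 hBsum
      _ = (1 + ε) * Real.exp 1 := by rw [Real.exp_add, Real.exp_log hε1]
  
  -- Part C: assembly
  set y : A → ℝ := fun k => vb k (S k) / vb k (R k) with hydef
  set u : A → ℝ := fun k => if k ∈ Abar then max (y k) 1 else 1 with hudef
  have hu1 : ∀ k, 1 ≤ u k := by
    intro k
    rw [hudef]
    by_cases hk : k ∈ Abar
    · simp only [hk, if_true]
      exact le_max_right _ _
    · simp [hk]
  set c : A → ℝ := fun k => if 1 < h k then 1 + h k else 2 with hcdef2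
  have hc1 : ∀ k, 0 < c k := by
    intro k
    rw [hcdef2]
    simp only
    split
    · linarith [hh k]
    · norm_num
  -- Part A : per-agent geometry
  have hA : ∀ k ∈ Abar, v k (S k) / max (v k {ℓ k}) (v k (R k)) ≤ 2 * u k - 1 := by
    intro k hk
    have ha := ha_pos k hk
    have hb0 : 0 ≤ v k (R k) := hv_nonneg k _
    have hs0 : 0 ≤ v k (S k) := hv_nonneg k _
    have hM : 0 < max (v k {ℓ k}) (v k (R k)) := lt_max_of_lt_left ha
    have hu : u k = max (y k) 1 := by rw [hudef]; simp [hk]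
    have hy : y k = (v k {ℓ k} + v k (S k)) / (v k {ℓ k} + v k (R k)) := by
      rw [hydef]; simp only; rw [hvb, hvb]
    rcases le_or_gt (v k (S k)) (v k (R k)) with hsb | hbs
    · have h1 : v k (S k) / max (v k {ℓ k}) (v k (R k)) ≤ 1 := by
        rw [div_le_one hM]
        exact le_trans hsb (le_max_right _ _)
      have h2 : 1 ≤ max (y k) 1 := le_max_right _ _
      rw [hu]; linarith
    · have hV : 0 < v k {ℓ k} + v k (R k) := by linarith
      have key : v k (S k) * (v k {ℓ k} + v k (R k))
          ≤ max (v k {ℓ k}) (v k (R k)) * (v k {ℓ k} + 2 * v k (S k) - v k (R k)) := by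
        rcases le_total (v k {ℓ k}) (v k (R k)) with hab | hab
        · rw [max_eq_right hab]; nlinarith
        · rw [max_eq_left hab]; nlinarith
      have h3 : v k (S k) / max (v k {ℓ k}) (v k (R k))
          ≤ (v k {ℓ k} + 2 * v k (S k) - v k (R k)) / (v k {ℓ k} + v k (R k)) := by
        rw [div_le_div_iff₀ hM hV]; linarith
      have h4 : (v k {ℓ k} + 2 * v k (S k) - v k (R k)) / (v k {ℓ k} + v k (R k))
          = 2 * ((v k {ℓ k} + v k (S k)) / (v k {ℓ k} + v k (R k))) - 1 := by
        field_simp; ring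
      have h5 : (v k {ℓ k} + v k (S k)) / (v k {ℓ k} + v k (R k)) ≤ max (y k) 1 := by
        rw [← hy]; exact le_max_left _ _
      rw [hu]
      rw [h4] at h3
      linarith
  -- pointwise bounds
  have hptw : ∀ k ∈ Abar, v k (S k) / max (v k {ℓ k}) (v k (R k)) + h k ≤ u k * c k := by
    intro k hk
    have h1 := hA k hk
    have h2 := hu1 k
    rw [hcdef2]
    simp only
    split
    · rename_i hhk
      nlinarith [hh k]
    · rename_i hhk
      push_neg at hhk
      nlinarith
  have hptw0 : ∀ k, k ∉ Abar → h k ≤ u k * c k := by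
    intro k hk
    have h2 : u k = 1 := by rw [hudef]; simp [hk]
    rw [h2, one_mul, hcdef2]
    simp only
    split
    · linarith
    · rename_i hhk
      push_neg at hhk
      linarith
  have hterm_nonneg : ∀ k ∈ Abar, 0 ≤ v k (S k) / max (v k {ℓ k}) (v k (R k)) + h k := by
    intro k hk
    have hM : 0 < max (v k {ℓ k}) (v k (R k)) := lt_max_of_lt_left (ha_pos k hk)
    have := hv_nonneg k (S k)
    have := hh k
    positivity
  -- step 1
  have hsplit : (∏ i ∈ univ \ Abar, h i ^ (w i)) *
      ∏ i ∈ Abar, (v i (S i) / max (v i {ℓ i}) (v i (R i)) + h i) ^ (w i)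
      ≤ ∏ k ∈ (univ : Finset A), (u k * c k) ^ (w k) := by
    rw [← Finset.prod_sdiff (Finset.subset_univ Abar)]
    have hb1 : (0:ℝ) ≤ ∏ k ∈ univ \ Abar, (u k * c k) ^ (w k) :=
      Finset.prod_nonneg fun k _ =>
        Real.rpow_nonneg (mul_nonneg (by linarith [hu1 k]) (hc1 k).le) _
    apply mul_le_mul
    · apply Finset.prod_le_prod (fun k _ => Real.rpow_nonneg (hh k) _)
      intro k hk
      exact Real.rpow_le_rpow (hh k) (hptw0 k (Finset.mem_sdiff.1 hk).2) (hw k).le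
    · apply Finset.prod_le_prod (fun k hk => Real.rpow_nonneg (hterm_nonneg k hk) _)
      intro k hk
      exact Real.rpow_le_rpow (hterm_nonneg k hk) (hptw k hk) (hw k).le
    · exact Finset.prod_nonneg fun k hk => Real.rpow_nonneg (hterm_nonneg k hk) _
    · exact hb1
  -- step 2
  have hmul : ∏ k ∈ (univ : Finset A), (u k * c k) ^ (w k)
      = (∏ k ∈ univ, u k ^ (w k)) * ∏ k ∈ univ, c k ^ (w k) := by
    rw [← Finset.prod_mul_distrib]
    exact Finset.prod_congr rfl fun k _ =>
      Real.mul_rpow (by linarith [hu1 k]) (hc1 k).le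
  -- step 3 : u-product
  have huprod : ∏ k ∈ (univ : Finset A), u k ^ (w k) ≤ (1 + ε) * Real.exp 1 := by
    have h0 : ∀ x ∈ (univ : Finset A), x ∉ B₁ → u x ^ (w x) = 1 := by
      intro k _ hk
      have hux : u k = 1 := by
        rw [hudef]
        by_cases hkA : k ∈ Abar
        · simp only [hkA, if_true]
          have hnot : ¬ 1 < y k := by
            intro hcon
            exact hk (by rw [hB₁def]; exact Finset.mem_filter.2 ⟨hkA, hcon⟩)
          rw [max_eq_right (not_lt.1 hnot)]
        · simp [hkA]
      rw [hux, Real.one_rpow]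
    have h1 : ∏ k ∈ B₁, u k ^ (w k) = ∏ k ∈ B₁, y k ^ (w k) := by
      refine Finset.prod_congr rfl fun k hk => ?_
      have hky : 1 < y k := by
        rw [hB₁def] at hk
        exact (Finset.mem_filter.1 hk).2
      have : u k = y k := by
        rw [hudef]
        simp only [hB₁Abar hk, if_true]
        exact max_eq_left hky.le
      rw [this]
    rw [← Finset.prod_subset (Finset.subset_univ B₁) h0, h1]
    exact hprodB
  -- step 4 : c-product
  set D := univ.filter (fun k : A => 1 < h k) with hDdef
  have hDsub : D ⊆ univ := Finset.subset_univ D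
  set x := ∑ k ∈ D, w k with hxdef
  have hx1 : x ≤ 1 := by
    rw [hxdef, ← hwsum]
    exact Finset.sum_le_sum_of_subset_of_nonneg hDsub (fun i _ _ => (hw i).le)
  have hsum_c : ∑ k ∈ univ \ D, w k = 1 - x := by
    rw [Finset.sum_sdiff_eq_sub hDsub, hwsum]
  have hcsplit : ∏ k ∈ (univ : Finset A), c k ^ (w k)
      = (∏ k ∈ univ \ D, ((2:ℝ)) ^ (w k)) * ∏ k ∈ D, (1 + h k) ^ (w k) := by
    rw [← Finset.prod_sdiff hDsub]
    congr 1
    · refine Finset.prod_congr rfl fun k hk => ?_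
      have hkD : k ∉ D := (Finset.mem_sdiff.1 hk).2
      have hnot : ¬ 1 < h k := by
        intro hcon
        exact hkD (by rw [hDdef]; exact Finset.mem_filter.2 ⟨Finset.mem_univ k, hcon⟩)
      rw [hcdef2]
      simp [hnot]
    · refine Finset.prod_congr rfl fun k hk => ?_
      have : 1 < h k := by
        rw [hDdef] at hk
        exact (Finset.mem_filter.1 hk).2
      rw [hcdef2]
      simp [this]
  have h2prod : ∏ k ∈ univ \ D, (2:ℝ) ^ (w k) = (2:ℝ) ^ (1 - x) := by
    rw [← hsum_c]
    have he : ∀ k ∈ univ \ D, (2:ℝ) ^ (w k) = Real.exp (Real.log 2 * w k) :=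
      fun k _ => Real.rpow_def_of_pos two_pos _
    rw [Finset.prod_congr rfl he, ← Real.exp_sum, ← Finset.mul_sum,
      ← Real.rpow_def_of_pos two_pos]
  have hwmax0 : 0 ≤ wmax := le_trans (hw (Classical.arbitrary A)).le (hwmax _)
  have hwh : ∑ k ∈ D, w k * h k ≤ ν := by
    calc ∑ k ∈ D, w k * h k ≤ ∑ k ∈ D, wmax * h k :=
          Finset.sum_le_sum fun k _ => mul_le_mul_of_nonneg_right (hwmax k) (hh k)
      _ = wmax * ∑ k ∈ D, h k := by rw [Finset.mul_sum]
      _ ≤ wmax * ∑ k ∈ univ, h k :=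
          mul_le_mul_of_nonneg_left
            (Finset.sum_le_sum_of_subset_of_nonneg hDsub (fun i _ _ => hh i)) hwmax0
      _ ≤ wmax * n := mul_le_mul_of_nonneg_left hhsum hwmax0
      _ = ν := by rw [hνdef]; ring
  have hν1 : 1 ≤ ν := by
    calc (1:ℝ) = ∑ i : A, w i := hwsum.symm
      _ ≤ ∑ _i : A, wmax := Finset.sum_le_sum (fun i _ => hwmax i)
      _ = (Fintype.card A : ℝ) * wmax := by
          rw [Finset.sum_const, nsmul_eq_mul, Finset.card_univ]
      _ = ν := by rw [hνdef, hn]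
  have hν0 : (0:ℝ) ≤ ν := by linarith
  have hbdd : BddAbove ((fun t : ℝ => (2:ℝ) ^ (1 - t) * (1 + ν / t) ^ t) '' Set.Ioc 0 1) := by
    refine ⟨2 * Real.exp ν, ?_⟩
    rintro z ⟨t, ht, rfl⟩
    obtain ⟨ht0, ht1⟩ := ht
    have hb1 : (2:ℝ) ^ (1 - t) ≤ 2 := by
      calc (2:ℝ) ^ (1 - t) ≤ (2:ℝ) ^ (1:ℝ) :=
            Real.rpow_le_rpow_of_exponent_le one_le_two (by linarith)
        _ = 2 := Real.rpow_one 2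
    have hval : (0:ℝ) < 1 + ν / t := by
      have : 0 ≤ ν / t := div_nonneg hν0 ht0.le
      linarith
    have hb2 : (1 + ν / t) ^ t ≤ Real.exp ν := by
      rw [Real.rpow_def_of_pos hval]
      apply Real.exp_le_exp.2
      have hlog : Real.log (1 + ν / t) ≤ ν / t := by
        have := Real.log_le_sub_one_of_pos hval
        linarith
      calc Real.log (1 + ν / t) * t ≤ (ν / t) * t :=
            mul_le_mul_of_nonneg_right hlog ht0.le
        _ = ν := by field_simp
    exact mul_le_mul hb1 hb2 (Real.rpow_nonneg hval.le t) (by norm_num)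
  have hφ1ν : 1 + ν ≤ φ ν := by
    rw [hφ ν]
    apply le_csSup hbdd
    refine ⟨1, by norm_num, ?_⟩
    show (2:ℝ) ^ ((1:ℝ) - 1) * (1 + ν / 1) ^ (1:ℝ) = 1 + ν
    rw [sub_self, Real.rpow_zero, one_mul, div_one, Real.rpow_one]
  have hcub : ∏ k ∈ (univ : Finset A), c k ^ (w k) ≤ φ ν := by
    rcases Finset.eq_empty_or_nonempty D with hD0 | hDne
    · have hx0 : x = 0 := by rw [hxdef, hD0, Finset.sum_empty]
      rw [hcsplit, h2prod, hD0, Finset.prod_empty, mul_one, hx0, sub_zero, Real.rpow_one]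
      linarith
    · have hx0 : 0 < x := by
        rw [hxdef]
        exact Finset.sum_pos (fun k _ => hw k) hDne
      have hDprod : ∏ k ∈ D, (1 + h k) ^ (w k) ≤ (1 + ν / x) ^ x := by
        have hsum1 : ∑ k ∈ D, w k / x = 1 := by
          rw [← Finset.sum_div, ← hxdef, div_self hx0.ne']
        have hgm := Real.geom_mean_le_arith_mean_weighted D (fun k => w k / x)
          (fun k => 1 + h k) (fun k _ => div_nonneg (hw k).le hx0.le) hsum1
          (fun k _ => by show (0:ℝ) ≤ 1 + h k; linarith [hh k])
        have hre : ∀ k ∈ D, (1 + h k) ^ (w k) = ((1 + h k) ^ (w k / x)) ^ x := by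
          intro k _
          rw [← Real.rpow_mul (by linarith [hh k] : (0:ℝ) ≤ 1 + h k),
            div_mul_cancel₀ _ hx0.ne']
        rw [Finset.prod_congr rfl hre,
          Real.finset_prod_rpow D _ (fun k _ => Real.rpow_nonneg (by linarith [hh k]) _) x]
        apply Real.rpow_le_rpow
          (Finset.prod_nonneg (fun k _ => Real.rpow_nonneg (by linarith [hh k]) _)) ?_ hx0.le
        calc ∏ k ∈ D, (1 + h k) ^ (w k / x) ≤ ∑ k ∈ D, (w k / x) * (1 + h k) := hgm
          _ = ∑ k ∈ D, (w k / x + (w k * h k) / x) :=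
              Finset.sum_congr rfl (fun k _ => by ring)
          _ = 1 + (∑ k ∈ D, w k * h k) / x := by
              rw [Finset.sum_add_distrib, hsum1, ← Finset.sum_div]
          _ ≤ 1 + ν / x := by
              have := div_le_div_of_nonneg_right hwh hx0.le
              linarith
      rw [hcsplit, h2prod]
      calc (2:ℝ) ^ (1 - x) * ∏ k ∈ D, (1 + h k) ^ (w k)
          ≤ (2:ℝ) ^ (1 - x) * (1 + ν / x) ^ x :=
            mul_le_mul_of_nonneg_left hDprod (Real.rpow_nonneg (by norm_num) _)
        _ ≤ φ ν := by
            rw [hφ ν]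
            apply le_csSup hbdd
            exact ⟨x, ⟨hx0, hx1⟩, rfl⟩
  -- final chain
  have hcnn : (0:ℝ) ≤ ∏ k ∈ (univ : Finset A), c k ^ (w k) :=
    Finset.prod_nonneg fun k _ => Real.rpow_nonneg (hc1 k).le _
  calc (∏ i ∈ univ \ Abar, h i ^ (w i)) *
      ∏ i ∈ Abar, (v i (S i) / max (v i {ℓ i}) (v i (R i)) + h i) ^ (w i)
      ≤ ∏ k ∈ (univ : Finset A), (u k * c k) ^ (w k) := hsplit
    _ = (∏ k ∈ univ, u k ^ (w k)) * ∏ k ∈ univ, c k ^ (w k) := hmul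
    _ ≤ ((1 + ε) * Real.exp 1) * φ ν :=
        mul_le_mul huprod hcub hcnn (by positivity)
    _ = (1 + ε) * φ ν * Real.exp 1 := by ring
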